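/- arXiv:1411.4717 — 3 statements merged into one kernel-verified Lean document; each statement's English description precedes it below -/
import Mathlib

section
/- For the symmetrized viscous coefficient matrices ĉ₁ⱼ of the compressible Navier–Stokes equations, the wall contraction satisfies -wᵀ(ĉ₁₁ ∂w/∂x₁ + ĉ₁₂ ∂w/∂x₂ + ĉ₁₃ ∂w/∂x₃) = κ (∂T/∂x₁)(1/T) when the no-slip conditions u₁ = u₂ = u₃ = 0 hold at the wall. -/
open Matrix

/-- Symmetrized viscous coefficient matrix `ĉ₁₁`. -/
noncomputable def c11hat (T μ κ u1 u2 u3 : ℝ) : Matrix (Fin 5) (Fin 5) ℝ :=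
  !![0, 0, 0, 0, 0;
     0, 4/3 * T * μ, 0, 0, 4/3 * T * μ * u1;
     0, 0, T * μ, 0, T * μ * u2;
     0, 0, 0, T * μ, T * μ * u3;
     0, 4/3 * T * μ * u1, T * μ * u2, T * μ * u3,
       T ^ 2 * κ + 1/3 * T * (4 * μ * u1 ^ 2 + 3 * μ * u2 ^ 2 + 3 * μ * u3 ^ 2)]

/-- Symmetrized viscous coefficient matrix `ĉ₂₂`. -/
noncomputable def c22hat (T μ κ u1 u2 u3 : ℝ) : Matrix (Fin 5) (Fin 5) ℝ :=
  !![0, 0, 0, 0, 0;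
     0, T * μ, 0, 0, T * μ * u1;
     0, 0, 4/3 * T * μ, 0, 4/3 * T * μ * u2;
     0, 0, 0, T * μ, T * μ * u3;
     0, T * μ * u1, 4/3 * T * μ * u2, T * μ * u3,
       T ^ 2 * κ + 1/3 * T * (3 * μ * u1 ^ 2 + 4 * μ * u2 ^ 2 + 3 * μ * u3 ^ 2)]

/-- Symmetrized viscous coefficient matrix `ĉ₃₃`. -/
noncomputable def c33hat (T μ κ u1 u2 u3 : ℝ) : Matrix (Fin 5) (Fin 5) ℝ :=
  !![0, 0, 0, 0, 0;
     0, T * μ, 0, 0, T * μ * u1;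
     0, 0, T * μ, 0, T * μ * u2;
     0, 0, 0, 4/3 * T * μ, 4/3 * T * μ * u3;
     0, T * μ * u1, T * μ * u2, 4/3 * T * μ * u3,
       T ^ 2 * κ + 1/3 * T * (3 * μ * u1 ^ 2 + 3 * μ * u2 ^ 2 + 4 * μ * u3 ^ 2)]

/-- Symmetrized viscous coefficient matrix `ĉ₁₂`. -/
noncomputable def c12hat (T μ u1 u2 u3 : ℝ) : Matrix (Fin 5) (Fin 5) ℝ :=
  !![0, 0, 0, 0, 0;
     0, 0, -(2/3) * T * μ, 0, -(2/3) * T * μ * u2;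
     0, T * μ, 0, 0, T * μ * u1;
     0, 0, 0, 0, 0;
     0, T * μ * u2, -(2/3) * T * μ * u1, 0, 1/3 * T * μ * u1 * u2]

/-- Symmetrized viscous coefficient matrix `ĉ₁₃`. -/
noncomputable def c13hat (T μ u1 u2 u3 : ℝ) : Matrix (Fin 5) (Fin 5) ℝ :=
  !![0, 0, 0, 0, 0;
     0, 0, 0, -(2/3) * T * μ, -(2/3) * T * μ * u3;
     0, 0, 0, 0, 0;
     0, T * μ, 0, 0, T * μ * u1;
     0, T * μ * u3, 0, -(2/3) * T * μ * u1, 1/3 * T * μ * u1 * u3]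

/-- Symmetrized viscous coefficient matrix `ĉ₂₃`. -/
noncomputable def c23hat (T μ u1 u2 u3 : ℝ) : Matrix (Fin 5) (Fin 5) ℝ :=
  !![0, 0, 0, 0, 0;
     0, 0, 0, 0, 0;
     0, 0, 0, -(2/3) * T * μ, -(2/3) * T * μ * u3;
     0, 0, T * μ, 0, T * μ * u2;
     0, 0, T * μ * u3, -(2/3) * T * μ * u2, 1/3 * T * μ * u2 * u3]

/-- at a no-slip wall (`u₁ = u₂ = u₃ = 0`), the viscous wall contraction
`-wᵀ(ĉ₁₁ ∂w/∂x₁ + ĉ₁₂ ∂w/∂x₂ + ĉ₁₃ ∂w/∂x₃)` equals `κ (∂T/∂x₁)(1/T)`.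
Here `θ1, θ2, θ3` denote the spatial gradients `∂w/∂xⱼ`; since `w(5) = -1/T`,
the fifth component of `θ1` is `(∂T/∂x₁)/T²`. -/
theorem viscous_wall_contraction_noslip
    (T μ κ u1 u2 u3 Tx s h : ℝ) (hT : 0 < T)
    (hu1 : u1 = 0) (hu2 : u2 = 0) (hu3 : u3 = 0)
    (w θ1 θ2 θ3 : Fin 5 → ℝ)
    (hw : w = ![h / T - s - (u1 ^ 2 + u2 ^ 2 + u3 ^ 2) / (2 * T),
      u1 / T, u2 / T, u3 / T, -1 / T])
    (hθ1 : θ1 4 = Tx / T ^ 2) :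
    -(w ⬝ᵥ ((c11hat T μ κ u1 u2 u3) *ᵥ θ1 + (c12hat T μ u1 u2 u3) *ᵥ θ2
        + (c13hat T μ u1 u2 u3) *ᵥ θ3)) = κ * Tx * (1 / T) := by
  subst hu1 hu2 hu3 hw
  have hT' : T ≠ 0 := hT.ne'
  simp [c11hat, c12hat, c13hat, Matrix.mulVec, dotProduct,
    Fin.sum_univ_five, Matrix.cons_val_zero, Matrix.cons_val_one, hθ1]
  field_simp
end

section
/- The 15×15 block matrix with 5×5 blocks ĉᵢⱼ (i,j = 1,2,3) of symmetrized viscous coefficients for the compressible Navier–Stokes equations is symmetric positive semi-definite whenever T > 0, μ ≥ 0, κ ≥ 0. -/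
open Matrix

/-- The 15×15 block matrix of the symmetrized viscous coefficient matrices `ĉᵢⱼ`,
with `ĉ₂₁ = ĉ₁₂ᵀ`, `ĉ₃₁ = ĉ₁₃ᵀ`, `ĉ₃₂ = ĉ₂₃ᵀ`. -/
noncomputable def viscousBlock (T μ κ u1 u2 u3 : ℝ) :
    Matrix (Fin 3 × Fin 5) (Fin 3 × Fin 5) ℝ :=
  Matrix.of fun p q =>
    (![![c11hat T μ κ u1 u2 u3, c12hat T μ u1 u2 u3, c13hat T μ u1 u2 u3],
       ![(c12hat T μ u1 u2 u3).transpose, c22hat T μ κ u1 u2 u3, c23hat T μ u1 u2 u3],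
       ![(c13hat T μ u1 u2 u3).transpose, (c23hat T μ u1 u2 u3).transpose,
         c33hat T μ κ u1 u2 u3]] p.1 q.1) p.2 q.2

set_option maxHeartbeats 1600000

/-- the 15×15 block matrix of the symmetrized viscous coefficient
matrices is symmetric positive semi-definite whenever `T > 0`, `μ ≥ 0`, `κ ≥ 0`,
for arbitrary velocities `u₁, u₂, u₃`. -/
theorem viscousBlock_posSemidef
    (T μ κ u1 u2 u3 : ℝ) (hT : 0 < T) (hμ : 0 ≤ μ) (hκ : 0 ≤ κ) :
    (viscousBlock T μ κ u1 u2 u3).IsSymm ∧ (viscousBlock T μ κ u1 u2 u3).PosSemidef := by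
  have h11 : ∀ a b, c11hat T μ κ u1 u2 u3 b a = c11hat T μ κ u1 u2 u3 a b := by
    intro a b; fin_cases a <;> fin_cases b <;> rfl
  have h22 : ∀ a b, c22hat T μ κ u1 u2 u3 b a = c22hat T μ κ u1 u2 u3 a b := by
    intro a b; fin_cases a <;> fin_cases b <;> rfl
  have h33 : ∀ a b, c33hat T μ κ u1 u2 u3 b a = c33hat T μ κ u1 u2 u3 a b := by
    intro a b; fin_cases a <;> fin_cases b <;> rfl
  have hsymm : (viscousBlock T μ κ u1 u2 u3).IsSymm := by
    ext ⟨i, a⟩ ⟨j, b⟩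
    simp only [Matrix.transpose_apply, viscousBlock, Matrix.of_apply]
    fin_cases i <;> fin_cases j <;>
      simp only [Matrix.cons_val_zero, Matrix.cons_val_one, Matrix.head_cons,
        Matrix.cons_val_two, Matrix.cons_val_succ, Matrix.vecTail, Matrix.vecHead,
        Function.comp_apply, Fin.succ_zero_eq_one, Matrix.transpose_apply] <;>
      first
        | rfl
        | exact h11 a b
        | exact h22 a b
        | exact h33 a b
  refine ⟨hsymm, posSemidef_iff_dotProduct_mulVec.mpr ⟨?_, ?_⟩⟩
  · show (viscousBlock T μ κ u1 u2 u3)ᴴ = _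
    rw [Matrix.conjTranspose_eq_transpose_of_trivial]; exact hsymm
  · intro x
    have hx : star x = x := by simp
    rw [hx]
    have key : x ⬝ᵥ (viscousBlock T μ κ u1 u2 u3) *ᵥ x =
        T * μ * (2/3 * (((x (0,1) + u1 * x (0,4)) - (x (1,2) + u2 * x (1,4)))^2
            + ((x (0,1) + u1 * x (0,4)) - (x (2,3) + u3 * x (2,4)))^2
            + ((x (1,2) + u2 * x (1,4)) - (x (2,3) + u3 * x (2,4)))^2)
          + ((x (0,2) + u2 * x (0,4)) + (x (1,1) + u1 * x (1,4)))^2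
          + ((x (0,3) + u3 * x (0,4)) + (x (2,1) + u1 * x (2,4)))^2
          + ((x (1,3) + u3 * x (1,4)) + (x (2,2) + u2 * x (2,4)))^2)
        + T^2 * κ * ((x (0,4))^2 + (x (1,4))^2 + (x (2,4))^2) := by
      simp only [dotProduct, Matrix.mulVec, Fintype.sum_prod_type,
        Fin.sum_univ_three, Fin.sum_univ_five, viscousBlock, Matrix.of_apply,
        Matrix.cons_val_zero, Matrix.cons_val_one, Matrix.cons_val_two,
        Matrix.cons_val_three, Matrix.cons_val_four, Matrix.head_cons,
        Matrix.vecTail, Matrix.vecHead, Matrix.transpose_apply,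
        c11hat, c22hat, c33hat, c12hat, c13hat, c23hat,
        Function.comp_apply, Fin.succ_zero_eq_one, Fin.succ_one_eq_two,
        Matrix.cons_val_succ, Matrix.cons_val_fin_one]
      ring
    rw [key]
    have h1 : (0:ℝ) ≤ T * μ := mul_nonneg hT.le hμ
    have h2 : (0:ℝ) ≤ T^2 * κ := mul_nonneg (sq_nonneg T) hκ
    positivity
end

section
/- The viscous boundary-flux penalty is mimetic: with the manufactured gradient Θ̃_{x₁} equal to the numerical gradient except that its fifth component is replaced by Θ̃_{x₁}(5) = -g(t)·w₍₁₎(5) = g(t)/T₍₁₎, and under no-slip (u₁ = u₂ = u₃ = 0) at the boundary node, the contraction -w₍₁₎ᵀ f̄₁^{(V,B)} = -w₍₁₎ᵀ(ĉ₁₁ Θ̃_{x₁} + ĉ₁₂ Θ_{x₂,(1)} + ĉ₁₃ Θ_{x₃,(1)}) equals κ g(t). -/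
open Matrix

/-- the viscous boundary-flux penalty is mimetic. With the manufactured
gradient `Θ̃_{x₁}` whose fifth component is `Θ̃_{x₁}(5) = -g(t)·w₍₁₎(5) = g(t)/T₍₁₎`,
and under no-slip (`u₁ = u₂ = u₃ = 0`) at the boundary node, the contraction
`-w₍₁₎ᵀ(ĉ₁₁ Θ̃_{x₁} + ĉ₁₂ Θ_{x₂,(1)} + ĉ₁₃ Θ_{x₃,(1)})` equals `κ g(t)`. -/
theorem viscous_boundary_flux_mimetic
    (T μ κ u1 u2 u3 g s h : ℝ) (hT : 0 < T)
    (hu1 : u1 = 0) (hu2 : u2 = 0) (hu3 : u3 = 0)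
    (w θt θ2 θ3 : Fin 5 → ℝ)
    (hw : w = ![h / T - s - (u1 ^ 2 + u2 ^ 2 + u3 ^ 2) / (2 * T),
      u1 / T, u2 / T, u3 / T, -1 / T])
    (hθt : θt 4 = -g * (-1 / T)) :
    -(w ⬝ᵥ ((c11hat T μ κ u1 u2 u3) *ᵥ θt + (c12hat T μ u1 u2 u3) *ᵥ θ2
        + (c13hat T μ u1 u2 u3) *ᵥ θ3)) = κ * g := by
  subst hu1 hu2 hu3 hw
  simp [c11hat, c12hat, c13hat, dotProduct, mulVec, Fin.sum_univ_five, hθt]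
  field_simp
end
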